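/- Let d be a positive integer and μ, σ, γ > 0. If ε > 2μ, then there exists exactly one real number n₀ > 0 such that r_rob(n₀, ε) = 0, and this root satisfies 2σ²·log 2 / (ε(ε + 2μ)) < n₀ < 2σ²·log 2 / (ε(ε − 2μ)). -/

import Mathlib

set_option maxHeartbeats 1000000

theorem r_rob_unique_root (d : ℕ) (hd : 0 < d) (μ σ γ ε : ℝ)
    (hμ : 0 < μ) (hσ : 0 < σ) (hγ : 0 < γ) (hε : 2 * μ < ε) :
    (∃! n₀ : ℝ, 0 < n₀ ∧
      d * γ * σ * Real.sqrt (2 / (n₀ * Real.pi)) *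
        (Real.exp (-(n₀ * (ε + μ) ^ 2) / (2 * σ ^ 2)) +
          Real.exp (-(n₀ * (ε - μ) ^ 2) / (2 * σ ^ 2)) -
          Real.exp (-(n₀ * μ ^ 2) / (2 * σ ^ 2))) = 0) ∧
    ∀ n₀ : ℝ, 0 < n₀ →
      d * γ * σ * Real.sqrt (2 / (n₀ * Real.pi)) *
        (Real.exp (-(n₀ * (ε + μ) ^ 2) / (2 * σ ^ 2)) +
          Real.exp (-(n₀ * (ε - μ) ^ 2) / (2 * σ ^ 2)) -
          Real.exp (-(n₀ * μ ^ 2) / (2 * σ ^ 2))) = 0 →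
      2 * σ ^ 2 * Real.log 2 / (ε * (ε + 2 * μ)) < n₀ ∧
        n₀ < 2 * σ ^ 2 * Real.log 2 / (ε * (ε - 2 * μ)) := by
  have hεpos : 0 < ε := lt_trans (by positivity) hε
  have hσ2 : (0:ℝ) < 2 * σ ^ 2 := by positivity
  have hne2 : (2 * σ ^ 2 : ℝ) ≠ 0 := hσ2.ne'
  have hd1 : ε * (ε + 2 * μ) ≠ 0 := (mul_pos hεpos (by linarith)).ne'
  have hd2 : ε * (ε - 2 * μ) ≠ 0 := (mul_pos hεpos (by linarith)).ne'
  set A : ℝ := ε * (ε + 2 * μ) / (2 * σ ^ 2) with hAdef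
  set B : ℝ := ε * (ε - 2 * μ) / (2 * σ ^ 2) with hBdef
  have hA : 0 < A := by rw [hAdef]; positivity
  have hB : 0 < B := by rw [hBdef]; exact div_pos (mul_pos hεpos (by linarith)) hσ2
  have hBA : B < A := by
    rw [hAdef, hBdef, div_lt_div_iff₀ hσ2 hσ2]
    nlinarith [mul_pos (mul_pos hεpos hμ) (pow_pos hσ 2)]
  set h : ℝ → ℝ := fun n => Real.exp (-(n * A)) + Real.exp (-(n * B)) with hhdef
  have hanti : StrictAnti h := by
    intro x y hxy
    apply add_lt_add <;> exact Real.exp_lt_exp.mpr (by nlinarith)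
  have hcont : Continuous h := by
    apply Continuous.add <;> exact Real.continuous_exp.comp (by continuity)
  set L : ℝ := 2 * σ ^ 2 * Real.log 2 / (ε * (ε + 2 * μ)) with hLdef
  set U : ℝ := 2 * σ ^ 2 * Real.log 2 / (ε * (ε - 2 * μ)) with hUdef
  have hlog2 : 0 < Real.log 2 := Real.log_pos (by norm_num)
  have hLA : L * A = Real.log 2 := by
    rw [hLdef, hAdef]; field_simp
  have hUB : U * B = Real.log 2 := by
    rw [hUdef, hBdef]; field_simp
    exact div_self (by linarith : (0:ℝ) < ε - 2 * μ).ne'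
  have hLpos : 0 < L := by
    rw [hLdef]
    exact div_pos (by positivity) (mul_pos hεpos (by linarith))
  have hUpos : 0 < U := by
    rw [hUdef]
    exact div_pos (by positivity) (mul_pos hεpos (by linarith))
  have hLU : L < U := by
    have h1 : L * A < U * A := by
      rw [hLA, ← hUB]; nlinarith
    exact lt_of_mul_lt_mul_right h1 hA.le
  have hexplog : Real.exp (-Real.log 2) = 1/2 := by
    rw [Real.exp_neg, Real.exp_log (by norm_num)]; norm_num
  have hhL : 1 < h L := by
    have h2 : 1/2 < Real.exp (-(L * B)) := by
      rw [← hexplog]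
      apply Real.exp_lt_exp.mpr
      have : L * B < L * A := by nlinarith
      rw [hLA] at this; linarith
    show 1 < Real.exp (-(L * A)) + Real.exp (-(L * B))
    rw [hLA, hexplog]; linarith
  have hhU : h U < 1 := by
    have h2 : Real.exp (-(U * A)) < 1/2 := by
      rw [← hexplog]
      apply Real.exp_lt_exp.mpr
      have : U * B < U * A := by nlinarith
      rw [hUB] at this; linarith
    show Real.exp (-(U * A)) + Real.exp (-(U * B)) < 1
    rw [hUB, hexplog]; linarith
  -- key equivalence
  have key : ∀ n : ℝ, 0 < n →
      (d * γ * σ * Real.sqrt (2 / (n * Real.pi)) *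
        (Real.exp (-(n * (ε + μ) ^ 2) / (2 * σ ^ 2)) +
          Real.exp (-(n * (ε - μ) ^ 2) / (2 * σ ^ 2)) -
          Real.exp (-(n * μ ^ 2) / (2 * σ ^ 2))) = 0 ↔ h n = 1) := by
    intro n hn
    have hdd : (0:ℝ) < d := Nat.cast_pos.mpr hd
    have hπ : (0:ℝ) < Real.pi := Real.pi_pos
    have hsq : 0 < Real.sqrt (2 / (n * Real.pi)) := Real.sqrt_pos.mpr (div_pos two_pos (mul_pos hn hπ))
    have hpre : 0 < (d:ℝ) * γ * σ * Real.sqrt (2 / (n * Real.pi)) :=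
      mul_pos (mul_pos (mul_pos hdd hγ) hσ) hsq
    have e1 : -(n * (ε + μ) ^ 2) / (2 * σ ^ 2) = -(n * μ ^ 2) / (2 * σ ^ 2) + -(n * A) := by
      rw [hAdef]; field_simp; ring
    have e2 : -(n * (ε - μ) ^ 2) / (2 * σ ^ 2) = -(n * μ ^ 2) / (2 * σ ^ 2) + -(n * B) := by
      rw [hBdef]; field_simp; ring
    have hE : Real.exp (-(n * (ε + μ) ^ 2) / (2 * σ ^ 2)) +
          Real.exp (-(n * (ε - μ) ^ 2) / (2 * σ ^ 2)) -
          Real.exp (-(n * μ ^ 2) / (2 * σ ^ 2))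
        = Real.exp (-(n * μ ^ 2) / (2 * σ ^ 2)) * (h n - 1) := by
      rw [e1, e2, Real.exp_add, Real.exp_add]
      show _ = _ * (Real.exp (-(n * A)) + Real.exp (-(n * B)) - 1)
      ring
    rw [hE, mul_eq_zero]
    constructor
    · rintro (h0 | h0)
      · exact absurd h0 hpre.ne'
      · rcases mul_eq_zero.mp h0 with h1 | h1
        · exact absurd h1 (Real.exp_pos _).ne'
        · linarith
    · intro h1; right; rw [h1]; ring
  -- existence via IVT
  obtain ⟨n₀, hn₀mem, hn₀⟩ :
      ∃ n₀ ∈ Set.Icc L U, h n₀ = 1 := by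
    have := intermediate_value_Icc' hLU.le hcont.continuousOn
    obtain ⟨n₀, hmem, heq⟩ := this ⟨hhU.le, hhL.le⟩
    exact ⟨n₀, hmem, heq⟩
  have hn₀pos : 0 < n₀ := lt_of_lt_of_le hLpos hn₀mem.1
  constructor
  · refine ⟨n₀, ⟨hn₀pos, (key n₀ hn₀pos).mpr hn₀⟩, ?_⟩
    rintro y ⟨hy, hyeq⟩
    exact hanti.injective (((key y hy).mp hyeq).trans hn₀.symm)
  · intro n hn hneq
    have h1 : h n = 1 := (key n hn).mp hneq
    constructor
    · have : h n < h L := by rw [h1]; exact hhL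
      exact hanti.lt_iff_gt.mp this
    · have : h U < h n := by rw [h1]; exact hhU
      exact hanti.lt_iff_gt.mp this
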